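/- Let X be a nontrivial real normed linear space. Then DW(X) = sup{ ‖u+v‖ / inf_{0<γ<1/2} ‖γu+(1−γ)v‖ : u, v ∈ S_X, u + v ≠ 0 }. -/

import Mathlib

namespace DW3Aux

variable {X : Type*} [NormedAddCommGroup X] [NormedSpace ℝ X]

lemma dw_key_aux (x y : X) (hx : x ≠ 0) (hy : y ≠ 0) (h : ‖x‖ ≤ ‖y‖) :
    (‖x‖ + ‖y‖) / ‖x - y‖ * ‖‖x‖⁻¹ • x - ‖y‖⁻¹ • y‖ ≤ 4 := by
  rcases eq_or_ne x y with rfl | hxy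
  · simp
  have ha : (0:ℝ) < ‖x‖ := norm_pos_iff.mpr hx
  have hb : (0:ℝ) < ‖y‖ := norm_pos_iff.mpr hy
  have hd : (0:ℝ) < ‖x - y‖ := by rw [norm_pos_iff]; exact sub_ne_zero_of_ne hxy
  have hba : ‖y‖ - ‖x‖ ≤ ‖x - y‖ := by
    have := abs_norm_sub_norm_le y x
    rw [norm_sub_rev] at this
    exact (abs_le.mp this).2.trans_eq rfl |>.trans_eq rfl
  have h1 : ‖‖x‖⁻¹ • x - ‖y‖⁻¹ • y‖ ≤ (‖y‖ - ‖x‖) / ‖y‖ + ‖x - y‖ / ‖y‖ := by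
    have hdec : ‖x‖⁻¹ • x - ‖y‖⁻¹ • y = (‖x‖⁻¹ - ‖y‖⁻¹) • x + ‖y‖⁻¹ • (x - y) := by
      module
    rw [hdec]
    refine (norm_add_le _ _).trans ?_
    rw [norm_smul, norm_smul, Real.norm_eq_abs, Real.norm_eq_abs]
    have e1 : |‖x‖⁻¹ - ‖y‖⁻¹| * ‖x‖ = (‖y‖ - ‖x‖) / ‖y‖ := by
      have hinv : ‖y‖⁻¹ ≤ ‖x‖⁻¹ := by gcongr
      rw [abs_of_nonneg (by linarith : (0:ℝ) ≤ ‖x‖⁻¹ - ‖y‖⁻¹)]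
      field_simp
    have e2 : |‖y‖⁻¹| * ‖x - y‖ = ‖x - y‖ / ‖y‖ := by
      rw [abs_of_pos (by positivity)]; ring
    rw [e1, e2]
  have h2 : ‖‖x‖⁻¹ • x - ‖y‖⁻¹ • y‖ ≤ 2 * ‖x - y‖ / ‖y‖ := by
    refine h1.trans ?_
    rw [← add_div]
    gcongr
    linarith
  calc (‖x‖ + ‖y‖) / ‖x - y‖ * ‖‖x‖⁻¹ • x - ‖y‖⁻¹ • y‖
      ≤ (‖x‖ + ‖y‖) / ‖x - y‖ * (2 * ‖x - y‖ / ‖y‖) := by gcongr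
    _ = 2 * (‖x‖ + ‖y‖) / ‖y‖ := by field_simp
    _ ≤ 4 := by rw [div_le_iff₀ hb]; linarith

lemma dw_key (x y : X) (hx : x ≠ 0) (hy : y ≠ 0) :
    (‖x‖ + ‖y‖) / ‖x - y‖ * ‖‖x‖⁻¹ • x - ‖y‖⁻¹ • y‖ ≤ 4 := by
  rcases le_total ‖x‖ ‖y‖ with h | h
  · exact dw_key_aux x y hx hy h
  · have := dw_key_aux y x hy hx h
    rw [norm_sub_rev y x, norm_sub_rev (‖y‖⁻¹ • y) (‖x‖⁻¹ • x), add_comm ‖y‖ ‖x‖] at this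
    exact this

lemma w_lb (u v : X) (γ : ℝ) (hu : ‖u‖ = 1) (hv : ‖v‖ = 1) (h0 : 0 < γ) (h2 : γ < 1/2) :
    0 < ‖γ • u + (1 - γ) • v‖ := by
  have h := norm_sub_norm_le ((1 - γ) • v) (-(γ • u))
  rw [sub_neg_eq_add, norm_neg, norm_smul, norm_smul, hu, hv, Real.norm_eq_abs,
    Real.norm_eq_abs, abs_of_pos h0, abs_of_pos (by linarith : (0:ℝ) < 1 - γ),
    mul_one, mul_one, add_comm] at h
  linarith

lemma quad (u v : X) (γ : ℝ) (hu : ‖u‖ = 1) (hv : ‖v‖ = 1) (h0 : 0 < γ) (h2 : γ < 1/2) :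
    ‖u + v‖ ≤ 4 * ‖γ • u + (1 - γ) • v‖ := by
  have hw := w_lb u v γ hu hv h0 h2
  have hg1 : (0:ℝ) < 1 - γ := by linarith
  have hx : γ • u ≠ 0 := by
    rw [← norm_pos_iff, norm_smul, hu, Real.norm_eq_abs, abs_of_pos h0, mul_one]; exact h0
  have hy : -((1 - γ) • v) ≠ 0 := by
    rw [← norm_pos_iff, norm_neg, norm_smul, hv, Real.norm_eq_abs, abs_of_pos hg1, mul_one]
    exact hg1
  have key := dw_key (γ • u) (-((1 - γ) • v)) hx hy
  have e1 : ‖γ • u‖ = γ := by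
    rw [norm_smul, hu, Real.norm_eq_abs, abs_of_pos h0, mul_one]
  have e2 : ‖-((1 - γ) • v)‖ = 1 - γ := by
    rw [norm_neg, norm_smul, hv, Real.norm_eq_abs, abs_of_pos hg1, mul_one]
  have e3 : γ • u - -((1 - γ) • v) = γ • u + (1 - γ) • v := by module
  have e4 : γ⁻¹ • (γ • u) - (1 - γ)⁻¹ • -((1 - γ) • v) = u + v := by
    rw [smul_smul, smul_neg, smul_smul, inv_mul_cancel₀ h0.ne',
      inv_mul_cancel₀ hg1.ne', one_smul, one_smul, sub_neg_eq_add]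
  rw [e1, e2, e3, e4] at key
  have hone : γ + (1 - γ) = 1 := by ring
  rw [hone, div_mul_eq_mul_div, one_mul, div_le_iff₀ hw] at key
  linarith

/-- The denominator set. -/
def Dset (u v : X) : Set ℝ := {r : ℝ | ∃ γ : ℝ, 0 < γ ∧ γ < 1/2 ∧ r = ‖γ • u + (1 - γ) • v‖}

lemma Dne (u v : X) : (Dset u v).Nonempty :=
  ⟨‖(1/4 : ℝ) • u + (1 - 1/4 : ℝ) • v‖, 1/4, by norm_num, by norm_num, rfl⟩

lemma Dbdd (u v : X) : BddBelow (Dset u v) := by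
  refine ⟨0, ?_⟩
  rintro r ⟨γ, _, _, rfl⟩
  positivity

lemma sInf_lb (u v : X) (hu : ‖u‖ = 1) (hv : ‖v‖ = 1) :
    ‖u + v‖ / 4 ≤ sInf (Dset u v) := by
  refine le_csInf (Dne u v) ?_
  rintro r ⟨γ, h0, h2, rfl⟩
  linarith [quad u v γ hu hv h0 h2]

lemma sInf_pos (u v : X) (hu : ‖u‖ = 1) (hv : ‖v‖ = 1) (huv : u + v ≠ 0) :
    0 < sInf (Dset u v) := by
  have h := sInf_lb u v hu hv
  have : (0:ℝ) < ‖u + v‖ := norm_pos_iff.mpr huv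
  linarith

/-- The first (DW) set. -/
def Sset (X : Type*) [NormedAddCommGroup X] [NormedSpace ℝ X] : Set ℝ :=
  {c : ℝ | ∃ x y : X, x ≠ 0 ∧ y ≠ 0 ∧ x ≠ y ∧
    c = (‖x‖ + ‖y‖) / ‖x - y‖ * ‖‖x‖⁻¹ • x - ‖y‖⁻¹ • y‖}

/-- The second set. -/
def Tset (X : Type*) [NormedAddCommGroup X] [NormedSpace ℝ X] : Set ℝ :=
  {c : ℝ | ∃ u v : X, ‖u‖ = 1 ∧ ‖v‖ = 1 ∧ u + v ≠ 0 ∧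
    c = ‖u + v‖ / sInf (Dset u v)}

lemma Sbdd : BddAbove (Sset X) := by
  refine ⟨4, ?_⟩
  rintro c ⟨x, y, hx, hy, _, rfl⟩
  exact dw_key x y hx hy

lemma Tbdd : BddAbove (Tset X) := by
  refine ⟨4, ?_⟩
  rintro c ⟨u, v, hu, hv, huv, rfl⟩
  have hI := sInf_pos u v hu hv huv
  have hlb := sInf_lb u v hu hv
  rw [div_le_iff₀ hI]
  linarith

lemma two_mem_T [Nontrivial X] : (2:ℝ) ∈ Tset X := by
  obtain ⟨z, hz⟩ := exists_ne (0 : X)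
  set u : X := ‖z‖⁻¹ • z with hu_def
  have hz' : (0:ℝ) < ‖z‖ := norm_pos_iff.mpr hz
  have hu : ‖u‖ = 1 := by
    rw [hu_def, norm_smul, Real.norm_eq_abs, abs_of_pos (inv_pos.mpr hz'),
      inv_mul_cancel₀ hz'.ne']
  have huu : u + u = (2:ℝ) • u := by module
  have hnu : ‖u + u‖ = 2 := by
    rw [huu, norm_smul, hu, Real.norm_eq_abs, mul_one]; norm_num
  have huv : u + u ≠ 0 := by rw [← norm_pos_iff, hnu]; norm_num
  have hD : Dset u u = {1} := by
    ext r
    constructor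
    · rintro ⟨γ, _, _, rfl⟩
      have : γ • u + (1 - γ) • u = u := by module
      simp [this, hu]
    · rintro rfl
      exact ⟨1/4, by norm_num, by norm_num, by
        rw [show (1/4:ℝ) • u + (1 - 1/4 : ℝ) • u = u by module, hu]⟩
  refine ⟨u, u, hu, hu, huv, ?_⟩
  rw [hnu, hD, csInf_singleton]
  norm_num

lemma two_mem_S [Nontrivial X] : (2:ℝ) ∈ Sset X := by
  obtain ⟨z, hz⟩ := exists_ne (0 : X)
  set u : X := ‖z‖⁻¹ • z with hu_def
  have hz' : (0:ℝ) < ‖z‖ := norm_pos_iff.mpr hz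
  have hu : ‖u‖ = 1 := by
    rw [hu_def, norm_smul, Real.norm_eq_abs, abs_of_pos (inv_pos.mpr hz'),
      inv_mul_cancel₀ hz'.ne']
  have hu0 : u ≠ 0 := by rw [← norm_pos_iff, hu]; norm_num
  have huu : u + u = (2:ℝ) • u := by module
  have hnu : ‖u + u‖ = 2 := by
    rw [huu, norm_smul, hu, Real.norm_eq_abs, mul_one]; norm_num
  refine ⟨u, -u, hu0, neg_ne_zero.mpr hu0, ?_, ?_⟩
  · intro h
    apply hu0
    have : u + u = 0 := by rw [← sub_neg_eq_add, ← h, sub_self]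
    rw [huu] at this
    exact (smul_eq_zero.mp this).resolve_left (by norm_num)
  · rw [norm_neg, hu, sub_neg_eq_add, hnu, inv_one, one_smul, one_smul, sub_neg_eq_add, hnu]
    norm_num

lemma mem_S (u v : X) (hu : ‖u‖ = 1) (hv : ‖v‖ = 1) (γ : ℝ) (h0 : 0 < γ) (h2 : γ < 1/2) :
    ‖u + v‖ / ‖γ • u + (1 - γ) • v‖ ∈ Sset X := by
  have hg1 : (0:ℝ) < 1 - γ := by linarith
  have hw := w_lb u v γ hu hv h0 h2
  have e1 : ‖γ • u‖ = γ := by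
    rw [norm_smul, hu, Real.norm_eq_abs, abs_of_pos h0, mul_one]
  have e2 : ‖-((1 - γ) • v)‖ = 1 - γ := by
    rw [norm_neg, norm_smul, hv, Real.norm_eq_abs, abs_of_pos hg1, mul_one]
  have e3 : γ • u - -((1 - γ) • v) = γ • u + (1 - γ) • v := by module
  have e4 : γ⁻¹ • (γ • u) - (1 - γ)⁻¹ • -((1 - γ) • v) = u + v := by
    rw [smul_smul, smul_neg, smul_smul, inv_mul_cancel₀ h0.ne',
      inv_mul_cancel₀ hg1.ne', one_smul, one_smul, sub_neg_eq_add]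
  refine ⟨γ • u, -((1 - γ) • v), ?_, ?_, ?_, ?_⟩
  · rw [← norm_pos_iff, e1]; exact h0
  · rw [← norm_pos_iff, e2]; exact hg1
  · apply sub_ne_zero.mp
    rw [e3, ← norm_pos_iff]
    exact hw
  · rw [e1, e2, e3, e4, show γ + (1 - γ) = (1:ℝ) by ring]
    field_simp

lemma ratio_le_supT [Nontrivial X] (u v : X) (hu : ‖u‖ = 1) (hv : ‖v‖ = 1)
    (γ : ℝ) (h0 : 0 < γ) (h2 : γ < 1/2) :
    ‖u + v‖ / ‖γ • u + (1 - γ) • v‖ ≤ sSup (Tset X) := by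
  have h2T : (2:ℝ) ≤ sSup (Tset X) := le_csSup Tbdd two_mem_T
  by_cases huv : u + v = 0
  · rw [huv, norm_zero, zero_div]; linarith
  · have hI := sInf_pos u v hu hv huv
    have hle : sInf (Dset u v) ≤ ‖γ • u + (1 - γ) • v‖ := csInf_le (Dbdd u v) ⟨γ, h0, h2, rfl⟩
    have hmem : ‖u + v‖ / sInf (Dset u v) ∈ Tset X := ⟨u, v, hu, hv, huv, rfl⟩
    have h1 : ‖u + v‖ / ‖γ • u + (1 - γ) • v‖ ≤ ‖u + v‖ / sInf (Dset u v) := by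
      gcongr
    exact h1.trans (le_csSup Tbdd hmem)

lemma S_le_supT [Nontrivial X] (x y : X) (hx : x ≠ 0) (hy : y ≠ 0) (hxy : x ≠ y)
    (hab : ‖x‖ < ‖y‖) :
    (‖x‖ + ‖y‖) / ‖x - y‖ * ‖‖x‖⁻¹ • x - ‖y‖⁻¹ • y‖ ≤ sSup (Tset X) := by
  have ha : (0:ℝ) < ‖x‖ := norm_pos_iff.mpr hx
  have hb : (0:ℝ) < ‖y‖ := norm_pos_iff.mpr hy
  have hd : (0:ℝ) < ‖x - y‖ := by rw [norm_pos_iff]; exact sub_ne_zero_of_ne hxy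
  have hab0 : (0:ℝ) < ‖x‖ + ‖y‖ := by linarith
  set u : X := ‖x‖⁻¹ • x with hu_def
  set v : X := -(‖y‖⁻¹ • y) with hv_def
  set γ : ℝ := ‖x‖ / (‖x‖ + ‖y‖) with hγ_def
  have hu : ‖u‖ = 1 := by
    rw [hu_def, norm_smul, Real.norm_eq_abs, abs_of_pos (inv_pos.mpr ha),
      inv_mul_cancel₀ ha.ne']
  have hv : ‖v‖ = 1 := by
    rw [hv_def, norm_neg, norm_smul, Real.norm_eq_abs, abs_of_pos (inv_pos.mpr hb),
      inv_mul_cancel₀ hb.ne']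
  have h0 : 0 < γ := by positivity
  have h2 : γ < 1/2 := by
    rw [hγ_def, div_lt_iff₀ hab0]; linarith
  have hw : γ • u + (1 - γ) • v = (‖x‖ + ‖y‖)⁻¹ • (x - y) := by
    rw [hu_def, hv_def, hγ_def]
    match_scalars <;> field_simp <;> ring
  have hnw : ‖γ • u + (1 - γ) • v‖ = (‖x‖ + ‖y‖)⁻¹ * ‖x - y‖ := by
    rw [hw, norm_smul, Real.norm_eq_abs, abs_of_pos (inv_pos.mpr hab0)]
  have huv : u + v = ‖x‖⁻¹ • x - ‖y‖⁻¹ • y := by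
    rw [hu_def, hv_def, ← sub_eq_add_neg]
  have key := ratio_le_supT u v hu hv γ h0 h2
  rw [hnw, huv] at key
  have heq : (‖x‖ + ‖y‖) / ‖x - y‖ * ‖‖x‖⁻¹ • x - ‖y‖⁻¹ • y‖ =
      ‖‖x‖⁻¹ • x - ‖y‖⁻¹ • y‖ / ((‖x‖ + ‖y‖)⁻¹ * ‖x - y‖) := by
    field_simp
  rw [heq]
  exact key

end DW3Aux

open DW3Aux

/-- `DW(X) = sup { ‖u+v‖ / inf_{0<γ<1/2} ‖γu+(1−γ)v‖ : u, v ∈ S_X, u+v ≠ 0 }`. -/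
theorem dunkl_williams_eq_DW3 {X : Type*} [NormedAddCommGroup X] [NormedSpace ℝ X]
    [Nontrivial X] :
    sSup {c : ℝ | ∃ x y : X, x ≠ 0 ∧ y ≠ 0 ∧ x ≠ y ∧
      c = (‖x‖ + ‖y‖) / ‖x - y‖ * ‖‖x‖⁻¹ • x - ‖y‖⁻¹ • y‖} =
    sSup {c : ℝ | ∃ u v : X, ‖u‖ = 1 ∧ ‖v‖ = 1 ∧ u + v ≠ 0 ∧
      c = ‖u + v‖ /
        sInf {r : ℝ | ∃ γ : ℝ, 0 < γ ∧ γ < 1/2 ∧ r = ‖γ • u + (1 - γ) • v‖}} := by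
  show sSup (Sset X) = sSup (Tset X)
  have hSne : (Sset X).Nonempty := ⟨2, two_mem_S⟩
  have hTne : (Tset X).Nonempty := ⟨2, two_mem_T⟩
  have hSpos : (0:ℝ) < sSup (Sset X) := lt_of_lt_of_le (by norm_num) (le_csSup Sbdd two_mem_S)
  refine le_antisymm (csSup_le hSne ?_) (csSup_le hTne ?_)
  · rintro c ⟨x, y, hx, hy, hxy, rfl⟩
    rcases lt_trichotomy ‖x‖ ‖y‖ with h | h | h
    · exact S_le_supT x y hx hy hxy h
    · -- equal norms: the value is 2
      have ha : (0:ℝ) < ‖x‖ := norm_pos_iff.mpr hx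
      have hd : (0:ℝ) < ‖x - y‖ := by rw [norm_pos_iff]; exact sub_ne_zero_of_ne hxy
      have e : ‖x‖⁻¹ • x - ‖y‖⁻¹ • y = ‖x‖⁻¹ • (x - y) := by
        rw [← h, ← smul_sub]
      rw [e, norm_smul, Real.norm_eq_abs, abs_of_pos (inv_pos.mpr ha), ← h]
      have : (‖x‖ + ‖x‖) / ‖x - y‖ * (‖x‖⁻¹ * ‖x - y‖) = 2 := by
        field_simp
        ring
      rw [this]
      exact le_csSup Tbdd two_mem_T
    · have := S_le_supT y x hy hx (Ne.symm hxy) h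
      rw [norm_sub_rev y x, norm_sub_rev (‖y‖⁻¹ • y) (‖x‖⁻¹ • x), add_comm ‖y‖ ‖x‖] at this
      exact this
  · rintro c ⟨u, v, hu, hv, huv, rfl⟩
    have hI : 0 < sInf (Dset u v) := sInf_pos u v hu hv huv
    have hclaim : ∀ r ∈ Dset u v, ‖u + v‖ / sSup (Sset X) ≤ r := by
      rintro r ⟨γ, h0, h2, rfl⟩
      have hw := w_lb u v γ hu hv h0 h2
      have hmem := mem_S u v hu hv γ h0 h2
      have h1 : ‖u + v‖ / ‖γ • u + (1 - γ) • v‖ ≤ sSup (Sset X) := le_csSup Sbdd hmem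
      rw [div_le_iff₀ hw] at h1
      rw [div_le_iff₀ hSpos]
      linarith [mul_comm (sSup (Sset X)) ‖γ • u + (1 - γ) • v‖]
    have hinf : ‖u + v‖ / sSup (Sset X) ≤ sInf (Dset u v) := le_csInf (Dne u v) hclaim
    rw [div_le_iff₀ hI]
    have hmul := mul_le_mul_of_nonneg_left hinf hSpos.le
    have hcanc : sSup (Sset X) * (‖u + v‖ / sSup (Sset X)) = ‖u + v‖ := by
      field_simp
    linarith
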